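/- For a smooth (finite-length) path γ and tensors e, f in the tensor algebra T(V*), the iterated-integral functionals satisfy φ_e(γ)·φ_f(γ) = φ_{e ⧢ f}(γ), i.e., the map e ↦ φ_e(γ) is an algebra homomorphism from (T(V*), ⧢) to R. -/

import Mathlib

open scoped Classical

set_option maxRecDepth 8000

/-- An (m,n)-shuffle: a permutation of `Fin (m+n)` increasing on the first `m`
positions and on the last `n` positions. -/
def IsShuffle (m n : ℕ) (σ : Equiv.Perm (Fin (m + n))) : Prop :=
  (∀ i j : Fin (m + n), i < j → (j : ℕ) < m → σ i < σ j) ∧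
  (∀ i j : Fin (m + n), i < j → m ≤ (i : ℕ) → σ i < σ j)

/-- The shuffle product of two basis words, as an element of the tensor algebra
(modelled as the free module on words over the basis `ι`). -/
noncomputable def shuffleWord {ι : Type*} (u v : List ι) : List ι →₀ ℝ :=
  ∑ σ ∈ Finset.univ.filter
      (fun σ : Equiv.Perm (Fin (u.length + v.length)) => IsShuffle u.length v.length σ),
    Finsupp.single
      (List.ofFn fun p : Fin (u.length + v.length) =>
        (u ++ v).get (Fin.cast (List.length_append : (u ++ v).length = u.length + v.length).symm (σ⁻¹ p))) 1

/-- The shuffle product, extended bilinearly to the whole tensor algebra. -/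
noncomputable def shuffleMul {ι : Type*} (a b : List ι →₀ ℝ) : List ι →₀ ℝ :=
  a.sum fun u cu => b.sum fun v cv => (cu * cv) • shuffleWord u v


open MeasureTheory

/-- The iterated integral `∫_{0<t_1<…<t_n<T} dγ^{i_1}_{t_1} ⋯ dγ^{i_n}_{t_n}`
attached to a basis word `w = (i_1,…,i_n)`. -/
noncomputable def iteratedIntegral (γ : ℝ → Fin 2 → ℝ) (T : ℝ) (w : List (Fin 2)) : ℝ :=
  ∫ u in {u : Fin w.length → ℝ |
      (∀ j, 0 < u j ∧ u j < T) ∧ ∀ j₁ j₂ : Fin w.length, j₁ < j₂ → u j₁ < u j₂},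
    ∏ j, deriv (fun r : ℝ => γ r (w.get j)) (u j)

/-- The iterated-integral functional `φ_e(γ)`, extended linearly from basis words. -/
noncomputable def phi (γ : ℝ → Fin 2 → ℝ) (T : ℝ) (a : List (Fin 2) →₀ ℝ) : ℝ :=
  a.sum fun w c => c * iteratedIntegral γ T w

/-! ### Auxiliary geometric sets -/

/-- The open simplex `0 < t_1 < … < t_k < T`. -/
def simplexSet (k : ℕ) (T : ℝ) : Set (Fin k → ℝ) :=
  {u : Fin k → ℝ | (∀ j, 0 < u j ∧ u j < T) ∧ ∀ j₁ j₂ : Fin k, j₁ < j₂ → u j₁ < u j₂}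

/-- The region of points whose coordinates are ordered according to `σ`. -/
def permSet (k : ℕ) (T : ℝ) (σ : Equiv.Perm (Fin k)) : Set (Fin k → ℝ) :=
  {s : Fin k → ℝ | (∀ j, 0 < s j ∧ s j < T) ∧ ∀ a b : Fin k, σ a < σ b → s a < s b}

/-- Points increasing separately on the two blocks. -/
def blockSet (m n : ℕ) (T : ℝ) : Set (Fin (m + n) → ℝ) :=
  {t | (∀ j, 0 < t j ∧ t j < T) ∧
    (∀ i j : Fin m, i < j → t (Fin.castAdd n i) < t (Fin.castAdd n j)) ∧
    (∀ i j : Fin n, i < j → t (Fin.natAdd m i) < t (Fin.natAdd m j))}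

lemma measurableSet_orderSet {k : ℕ} (T : ℝ) (R : Fin k → Fin k → Prop) :
    MeasurableSet {u : Fin k → ℝ | (∀ j, 0 < u j ∧ u j < T) ∧ ∀ i j, R i j → u i < u j} := by
  have h1 : MeasurableSet {u : Fin k → ℝ | ∀ j, 0 < u j ∧ u j < T} := by
    rw [Set.setOf_forall]
    exact MeasurableSet.iInter fun j =>
      (measurableSet_lt measurable_const (measurable_pi_apply j)).inter
        (measurableSet_lt (measurable_pi_apply j) measurable_const)
  have h2 : MeasurableSet {u : Fin k → ℝ | ∀ i j, R i j → u i < u j} := by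
    rw [Set.setOf_forall]
    refine MeasurableSet.iInter fun i => ?_
    rw [Set.setOf_forall]
    refine MeasurableSet.iInter fun j => ?_
    by_cases h : R i j
    · simpa [h] using measurableSet_lt (measurable_pi_apply i) (measurable_pi_apply j)
    · simp [h]
  exact (Set.setOf_and ▸ h1.inter h2 : _)

lemma measurableSet_simplexSet {k : ℕ} (T : ℝ) : MeasurableSet (simplexSet k T) :=
  measurableSet_orderSet T _

lemma measurableSet_permSet {k : ℕ} (T : ℝ) (σ : Equiv.Perm (Fin k)) :
    MeasurableSet (permSet k T σ) :=
  measurableSet_orderSet T _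

lemma integrableOn_prod {k : ℕ} (T : ℝ) (G : Fin k → ℝ → ℝ) (hG : ∀ p, Continuous (G p))
    {s : Set (Fin k → ℝ)} (hsub : s ⊆ {u | ∀ j, 0 < u j ∧ u j < T}) :
    IntegrableOn (fun t => ∏ p, G p (t p)) s := by
  have hF : Continuous fun t : Fin k → ℝ => ∏ p, G p (t p) :=
    continuous_finset_prod _ fun p _ => (hG p).comp (continuous_apply p)
  have hbox : IntegrableOn (fun t => ∏ p, G p (t p)) (Set.univ.pi fun _ : Fin k => Set.Icc 0 T) :=
    hF.continuousOn.integrableOn_compact (isCompact_univ_pi fun _ => isCompact_Icc)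
  refine hbox.mono_set fun t ht j _ => ?_
  exact ⟨(hsub ht j).1.le, (hsub ht j).2.le⟩

/-! ### Change of variables by a coordinate permutation -/

lemma piCongrLeft_perm_apply (k : ℕ) (σ : Equiv.Perm (Fin k)) (t : Fin k → ℝ) (j : Fin k) :
    (MeasurableEquiv.piCongrLeft (fun _ : Fin k => ℝ) σ⁻¹) t j = t (σ j) := by
  simp [MeasurableEquiv.piCongrLeft, Equiv.piCongrLeft, Equiv.Perm.inv_def]

lemma setIntegral_perm (k : ℕ) (σ : Equiv.Perm (Fin k)) (F : (Fin k → ℝ) → ℝ)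
    (s : Set (Fin k → ℝ)) :
    ∫ x in s, F x = ∫ t in (fun t : Fin k → ℝ => fun j => t (σ j)) ⁻¹' s,
      F (fun j => t (σ j)) := by
  have hmp := MeasureTheory.volume_measurePreserving_piCongrLeft (fun _ : Fin k => ℝ) σ⁻¹
  have hemb := (MeasurableEquiv.piCongrLeft (fun _ : Fin k => ℝ) σ⁻¹).measurableEmbedding
  have h := hmp.setIntegral_preimage_emb hemb F s
  rw [← h]
  have hfun : ⇑(MeasurableEquiv.piCongrLeft (fun _ : Fin k => ℝ) σ⁻¹)
      = fun t : Fin k → ℝ => fun j => t (σ j) := by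
    funext t j; exact piCongrLeft_perm_apply k σ t j
  rw [hfun]

/-! ### Splitting the first and last blocks -/

noncomputable def splitEquiv (m n : ℕ) : (Fin (m + n) → ℝ) ≃ᵐ (Fin m → ℝ) × (Fin n → ℝ) :=
  (MeasurableEquiv.piCongrLeft (fun _ : Fin (m + n) => ℝ) finSumFinEquiv).symm.trans
    (MeasurableEquiv.sumPiEquivProdPi fun _ => ℝ)

lemma splitEquiv_apply (m n : ℕ) (t : Fin (m + n) → ℝ) :
    splitEquiv m n t = (fun i => t (Fin.castAdd n i), fun i => t (Fin.natAdd m i)) := by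
  simp [splitEquiv, MeasurableEquiv.piCongrLeft, Equiv.piCongrLeft,
    MeasurableEquiv.sumPiEquivProdPi, Equiv.sumPiEquivProdPi, MeasurableEquiv.trans]

lemma splitEquiv_measurePreserving (m n : ℕ) :
    MeasurePreserving (splitEquiv m n) volume volume :=
  (volume_measurePreserving_sumPiEquivProdPi fun _ : Fin m ⊕ Fin n => ℝ).comp
    ((volume_measurePreserving_piCongrLeft (fun _ : Fin (m + n) => ℝ) finSumFinEquiv).symm _)

lemma split_integral (m n : ℕ) (f : (Fin m → ℝ) → ℝ) (g : (Fin n → ℝ) → ℝ)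
    (sm : Set (Fin m → ℝ)) (sn : Set (Fin n → ℝ))
    (hsm : MeasurableSet sm) (hsn : MeasurableSet sn) :
    ∫ t in (splitEquiv m n) ⁻¹' (sm ×ˢ sn),
        f (fun i => t (Fin.castAdd n i)) * g (fun i => t (Fin.natAdd m i)) =
      (∫ x in sm, f x) * ∫ y in sn, g y := by
  have h := (splitEquiv_measurePreserving m n).setIntegral_preimage_emb
    (splitEquiv m n).measurableEmbedding (fun p => f p.1 * g p.2) (sm ×ˢ sn)
  rw [Measure.volume_eq_prod] at h
  rw [← setIntegral_prod_mul, ← h]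
  refine setIntegral_congr_fun ((splitEquiv m n).measurableSet_preimage.2
    (hsm.prod hsn)) fun t _ => ?_
  rw [splitEquiv_apply]

lemma split_preimage (m n : ℕ) (T : ℝ) :
    (splitEquiv m n) ⁻¹' (simplexSet m T ×ˢ simplexSet n T) = blockSet m n T := by
  ext t
  simp only [Set.mem_preimage, splitEquiv_apply, Set.mem_prod, simplexSet, blockSet,
    Set.mem_setOf_eq]
  constructor
  · rintro ⟨⟨hb1, hm1⟩, hb2, hm2⟩
    refine ⟨fun j => ?_, hm1, hm2⟩
    by_cases h : (j : ℕ) < m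
    · have hj : j = Fin.castAdd n ⟨j, h⟩ := by ext; rfl
      rw [hj]; exact hb1 _
    · have hj : j = Fin.natAdd m ⟨(j : ℕ) - m, by omega⟩ := by
        ext; simp only [Fin.coe_natAdd]; omega
      rw [hj]; exact hb2 _
  · rintro ⟨hb, hm1, hm2⟩
    exact ⟨⟨fun j => hb _, hm1⟩, fun j => hb _, hm2⟩

/-! ### Combinatorics of the decomposition -/

lemma perm_preimage {k : ℕ} {T : ℝ} (σ : Equiv.Perm (Fin k)) :
    (fun t : Fin k → ℝ => fun j => t (σ j)) ⁻¹' permSet k T σ = simplexSet k T := by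
  ext t
  simp only [Set.mem_preimage, permSet, simplexSet, Set.mem_setOf_eq]
  constructor
  · rintro ⟨hb, hm⟩
    refine ⟨fun j => by simpa using hb (σ.symm j), fun i j hij => ?_⟩
    have := hm (σ.symm i) (σ.symm j) (by simpa using hij)
    simpa using this
  · rintro ⟨hb, hm⟩
    exact ⟨fun j => hb (σ j), fun a b hab => hm _ _ hab⟩

lemma permSet_strictMono {k : ℕ} {T : ℝ} {σ : Equiv.Perm (Fin k)} {s : Fin k → ℝ}
    (hs : s ∈ permSet k T σ) : StrictMono (s ∘ ⇑σ⁻¹) := by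
  intro i j hij
  exact hs.2 _ _ (by simpa using hij)

lemma permSet_injective {k : ℕ} {T : ℝ} {σ : Equiv.Perm (Fin k)} {s : Fin k → ℝ}
    (hs : s ∈ permSet k T σ) : Function.Injective s := by
  have h : s = (s ∘ ⇑σ⁻¹) ∘ ⇑σ := by funext i; simp
  rw [h]
  exact (permSet_strictMono hs).injective.comp σ.injective

lemma permSet_disjoint {k : ℕ} {T : ℝ} {σ τ : Equiv.Perm (Fin k)} (h : σ ≠ τ) :
    Disjoint (permSet k T σ) (permSet k T τ) := by
  rw [Set.disjoint_left]
  intro s hσ hτ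
  apply h
  have h1 := Tuple.unique_monotone (f := s) (σ := σ⁻¹) (τ := τ⁻¹)
    (permSet_strictMono hσ).monotone (permSet_strictMono hτ).monotone
  have h2 : (σ⁻¹ : Equiv.Perm (Fin k)) = τ⁻¹ :=
    Equiv.ext fun i => permSet_injective hσ (congrFun h1 i)
  exact inv_injective h2

lemma permSet_subset_blockSet {m n : ℕ} {T : ℝ} {σ : Equiv.Perm (Fin (m + n))}
    (hσ : IsShuffle m n σ) : permSet (m + n) T σ ⊆ blockSet m n T := by
  intro s hs
  refine ⟨hs.1, fun i j hij => ?_, fun i j hij => ?_⟩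
  · refine hs.2 _ _ (hσ.1 _ _ ?_ ?_)
    · simp only [Fin.lt_def, Fin.coe_castAdd]; exact hij
    · simpa using j.2
  · refine hs.2 _ _ (hσ.2 _ _ ?_ ?_)
    · simp only [Fin.lt_def, Fin.coe_natAdd]; exact Nat.add_lt_add_left hij m
    · simp

lemma blockSet_cover {m n : ℕ} {T : ℝ} {t : Fin (m + n) → ℝ} (ht : t ∈ blockSet m n T)
    (hinj : Function.Injective t) :
    ∃ σ : Equiv.Perm (Fin (m + n)), IsShuffle m n σ ∧ t ∈ permSet (m + n) T σ := by
  set π := Tuple.sort t with hπ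
  have hstrict : StrictMono (t ∘ ⇑π) :=
    (Tuple.monotone_sort t).strictMono_of_injective (hinj.comp π.injective)
  refine ⟨π⁻¹, ?_, ?_⟩
  · have key : ∀ a b : Fin (m + n), t a < t b → π⁻¹ a < π⁻¹ b := by
      intro a b hab
      rcases lt_trichotomy (π⁻¹ a) (π⁻¹ b) with h | h | h
      · exact h
      · exact absurd (π⁻¹.injective h ▸ hab) (lt_irrefl _)
      · have := hstrict h
        simp only [Function.comp_apply, Equiv.Perm.inv_def, Equiv.apply_symm_apply] at this
        exact absurd (lt_trans hab this) (lt_irrefl _)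
    constructor
    · intro i j hij hjm
      refine key _ _ ?_
      have him : (i : ℕ) < m := lt_trans (Fin.lt_def.1 hij) hjm
      have hi : i = Fin.castAdd n ⟨i, him⟩ := by ext; rfl
      have hj : j = Fin.castAdd n ⟨j, hjm⟩ := by ext; rfl
      rw [hi, hj]
      exact ht.2.1 _ _ hij
    · intro i j hij him
      refine key _ _ ?_
      have hjm : m ≤ (j : ℕ) := le_trans him (le_of_lt (Fin.lt_def.1 hij))
      have hi : i = Fin.natAdd m ⟨(i : ℕ) - m, by omega⟩ := by
        ext; simp only [Fin.coe_natAdd]; omega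
      have hj : j = Fin.natAdd m ⟨(j : ℕ) - m, by omega⟩ := by
        ext; simp only [Fin.coe_natAdd]; omega
      rw [hi, hj]
      refine ht.2.2 _ _ ?_
      have h' := (Fin.lt_def).1 hij
      simp only [Fin.lt_def]
      omega
  · refine ⟨ht.1, fun a b hab => ?_⟩
    rcases lt_trichotomy (t a) (t b) with h | h | h
    · exact h
    · exact absurd hab (by rw [hinj h]; exact lt_irrefl _)
    · have hba : π⁻¹ b < π⁻¹ a := by
        rcases lt_trichotomy (π⁻¹ b) (π⁻¹ a) with h' | h' | h'
        · exact h'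
        · exact absurd (π⁻¹.injective h' ▸ h) (lt_irrefl _)
        · have := hstrict h'
          simp only [Function.comp_apply, Equiv.Perm.inv_def, Equiv.apply_symm_apply] at this
          exact absurd (lt_trans h this) (lt_irrefl _)
      exact absurd hba (not_lt.2 (le_of_lt hab))

/-! ### Null sets -/

lemma volume_eq_coords_null (k : ℕ) (i j : Fin k) (hij : i ≠ j) :
    volume {t : Fin k → ℝ | t i = t j} = 0 := by
  set L : (Fin k → ℝ) →ₗ[ℝ] ℝ :=
    (LinearMap.proj i : (Fin k → ℝ) →ₗ[ℝ] ℝ) - (LinearMap.proj j : (Fin k → ℝ) →ₗ[ℝ] ℝ) with hL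
  have hset : {t : Fin k → ℝ | t i = t j} = (LinearMap.ker L : Set (Fin k → ℝ)) := by
    ext t
    simp [hL, LinearMap.mem_ker, sub_eq_zero, eq_comm]
  rw [hset]
  refine Measure.addHaar_submodule _ _ ?_
  intro htop
  have h1 : L (Pi.single i 1) = 1 := by
    simp [hL, Pi.single_apply, hij, (Ne.symm hij)]
  have h2 : Pi.single i (1 : ℝ) ∈ LinearMap.ker L := htop ▸ Submodule.mem_top
  rw [LinearMap.mem_ker] at h2
  rw [h2] at h1
  exact one_ne_zero h1.symm

lemma volume_diag_null (k : ℕ) :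
    volume {t : Fin k → ℝ | ∃ i j : Fin k, i ≠ j ∧ t i = t j} = 0 := by
  have h : {t : Fin k → ℝ | ∃ i j : Fin k, i ≠ j ∧ t i = t j} =
      ⋃ i : Fin k, ⋃ j : Fin k, ⋃ _ : i ≠ j, {t : Fin k → ℝ | t i = t j} := by
    ext t; simp
  rw [h]
  exact measure_iUnion_null fun i => measure_iUnion_null fun j => measure_iUnion_null fun h =>
    volume_eq_coords_null k i j h

/-! ### The key analytic identity -/

theorem key_identity (m n : ℕ) (T : ℝ) (G : Fin (m + n) → ℝ → ℝ)
    (hG : ∀ p, Continuous (G p)) :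
    (∫ x in simplexSet m T, ∏ i, G (Fin.castAdd n i) (x i)) *
      (∫ y in simplexSet n T, ∏ i, G (Fin.natAdd m i) (y i)) =
    ∑ σ ∈ Finset.univ.filter (fun σ : Equiv.Perm (Fin (m + n)) => IsShuffle m n σ),
      ∫ t in simplexSet (m + n) T, ∏ p, G (σ⁻¹ p) (t p) := by
  set F : (Fin (m + n) → ℝ) → ℝ := fun t => ∏ p, G p (t p) with hF
  -- each term of the RHS is an integral of `F` over `permSet σ`
  have hterm : ∀ σ : Equiv.Perm (Fin (m + n)),
      ∫ t in simplexSet (m + n) T, ∏ p, G (σ⁻¹ p) (t p)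
        = ∫ s in permSet (m + n) T σ, F s := by
    intro σ
    rw [setIntegral_perm (m + n) σ F (permSet (m + n) T σ), perm_preimage σ]
    refine setIntegral_congr_fun (measurableSet_simplexSet T) fun t _ => ?_
    show (∏ p, G (σ⁻¹ p) (t p)) = ∏ p, G p (t (σ p))
    rw [← Equiv.prod_comp σ (fun p => G (σ⁻¹ p) (t p))]
    refine Finset.prod_congr rfl fun q _ => ?_
    simp
  have hIntPerm : ∀ σ : Equiv.Perm (Fin (m + n)), IntegrableOn F (permSet (m + n) T σ) :=
    fun σ => integrableOn_prod T G hG fun s hs => hs.1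
  -- sum the RHS into an integral over the union
  have hdisj : (↑(Finset.univ.filter
        (fun σ : Equiv.Perm (Fin (m + n)) => IsShuffle m n σ)) : Set (Equiv.Perm (Fin (m + n)))
      ).Pairwise (Function.onFun Disjoint fun σ => permSet (m + n) T σ) :=
    fun σ _ τ _ hne => permSet_disjoint hne
  have hsum : ∑ σ ∈ Finset.univ.filter (fun σ : Equiv.Perm (Fin (m + n)) => IsShuffle m n σ),
      ∫ s in permSet (m + n) T σ, F s
      = ∫ s in ⋃ σ ∈ Finset.univ.filter (fun σ : Equiv.Perm (Fin (m + n)) => IsShuffle m n σ),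
          permSet (m + n) T σ, F s := by
    rw [integral_biUnion_finset _ (fun σ _ => measurableSet_permSet T σ) hdisj
      (fun σ _ => hIntPerm σ)]
  -- the union agrees a.e. with `blockSet`
  have hae : (⋃ σ ∈ Finset.univ.filter (fun σ : Equiv.Perm (Fin (m + n)) => IsShuffle m n σ),
      permSet (m + n) T σ) =ᵐ[volume] blockSet m n T := by
    rw [MeasureTheory.ae_eq_set]
    constructor
    · have hsub : (⋃ σ ∈ Finset.univ.filter
          (fun σ : Equiv.Perm (Fin (m + n)) => IsShuffle m n σ), permSet (m + n) T σ)
          ⊆ blockSet m n T :=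
        Set.iUnion₂_subset fun σ hσ =>
          permSet_subset_blockSet (Finset.mem_filter.1 hσ).2
      rw [Set.diff_eq_empty.2 hsub]
      simp
    · refine measure_mono_null ?_ (volume_diag_null (m + n))
      intro t ht
      obtain ⟨htb, htu⟩ := ht
      by_contra hne
      simp only [Set.mem_setOf_eq, not_exists, not_and] at hne
      have hinj : Function.Injective t := by
        intro a b hab
        by_contra hab'
        exact hne a b hab' hab
      obtain ⟨σ, hσ, htσ⟩ := blockSet_cover htb hinj
      exact htu (Set.mem_biUnion (Finset.mem_filter.2 ⟨Finset.mem_univ _, hσ⟩) htσ)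
  -- evaluate the integral over `blockSet` by Fubini
  have hblock : ∫ t in blockSet m n T, F t
      = (∫ x in simplexSet m T, ∏ i, G (Fin.castAdd n i) (x i)) *
        (∫ y in simplexSet n T, ∏ i, G (Fin.natAdd m i) (y i)) := by
    rw [← split_preimage m n T,
      ← split_integral m n (fun x => ∏ i, G (Fin.castAdd n i) (x i))
        (fun y => ∏ i, G (Fin.natAdd m i) (y i)) _ _
        (measurableSet_simplexSet T) (measurableSet_simplexSet T)]
    refine setIntegral_congr_fun ((splitEquiv m n).measurableSet_preimage.2
      ((measurableSet_simplexSet T).prod (measurableSet_simplexSet T))) fun t _ => ?_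
    show F t = _
    rw [hF]
    exact Fin.prod_univ_add fun p => G p (t p)
  calc (∫ x in simplexSet m T, ∏ i, G (Fin.castAdd n i) (x i)) *
      (∫ y in simplexSet n T, ∏ i, G (Fin.natAdd m i) (y i))
      = ∫ t in blockSet m n T, F t := hblock.symm
    _ = ∫ s in ⋃ σ ∈ Finset.univ.filter
          (fun σ : Equiv.Perm (Fin (m + n)) => IsShuffle m n σ), permSet (m + n) T σ, F s :=
        (setIntegral_congr_set hae).symm
    _ = ∑ σ ∈ Finset.univ.filter (fun σ : Equiv.Perm (Fin (m + n)) => IsShuffle m n σ),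
          ∫ s in permSet (m + n) T σ, F s := hsum.symm
    _ = _ := by
        exact Finset.sum_congr rfl fun σ _ => (hterm σ).symm

/-! ### Linearity lemmas -/

lemma iteratedIntegral_eq (γ : ℝ → Fin 2 → ℝ) (T : ℝ) (w : List (Fin 2)) {k : ℕ}
    (h : w.length = k) :
    iteratedIntegral γ T w = ∫ t in simplexSet k T,
      ∏ j : Fin k, deriv (fun r : ℝ => γ r (w.get (Fin.cast h.symm j))) (t j) := by
  subst h
  rfl

lemma iteratedIntegral_ofFn (γ : ℝ → Fin 2 → ℝ) (T : ℝ) {k : ℕ} (f : Fin k → Fin 2) :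
    iteratedIntegral γ T (List.ofFn f) = ∫ t in simplexSet k T,
      ∏ j : Fin k, deriv (fun r : ℝ => γ r (f j)) (t j) := by
  rw [iteratedIntegral_eq γ T (List.ofFn f) (List.length_ofFn (f := f))]
  refine setIntegral_congr_fun (measurableSet_simplexSet T) fun t _ => ?_
  refine Finset.prod_congr rfl fun j _ => ?_
  congr 1
  funext r
  congr 1
  rw [List.get_ofFn]
  congr 1

lemma phi_single (γ : ℝ → Fin 2 → ℝ) (T : ℝ) (w : List (Fin 2)) (c : ℝ) :
    phi γ T (Finsupp.single w c) = c * iteratedIntegral γ T w :=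
  Finsupp.sum_single_index (zero_mul _)

lemma phi_add (γ : ℝ → Fin 2 → ℝ) (T : ℝ) (a b : List (Fin 2) →₀ ℝ) :
    phi γ T (a + b) = phi γ T a + phi γ T b :=
  Finsupp.sum_add_index' (fun _ => zero_mul _) (fun w c d => add_mul c d _)

lemma phi_zero (γ : ℝ → Fin 2 → ℝ) (T : ℝ) : phi γ T 0 = 0 :=
  Finsupp.sum_zero_index

lemma phi_smul (γ : ℝ → Fin 2 → ℝ) (T : ℝ) (c : ℝ) (a : List (Fin 2) →₀ ℝ) :
    phi γ T (c • a) = c * phi γ T a := by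
  rw [phi, Finsupp.sum_smul_index fun w => zero_mul (iteratedIntegral γ T w), phi,
    Finsupp.mul_sum]
  refine Finsupp.sum_congr fun w _ => ?_
  simp [mul_assoc]

lemma phi_finset_sum (γ : ℝ → Fin 2 → ℝ) (T : ℝ) {ι : Type*} (s : Finset ι)
    (f : ι → (List (Fin 2) →₀ ℝ)) :
    phi γ T (∑ x ∈ s, f x) = ∑ x ∈ s, phi γ T (f x) := by
  induction s using Finset.cons_induction with
  | empty => simp [phi_zero]
  | cons x s hx ih => rw [Finset.sum_cons, phi_add, ih, Finset.sum_cons]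

lemma shuffleMul_single_single {ι : Type*} (u v : List ι) (c d : ℝ) :
    shuffleMul (Finsupp.single u c) (Finsupp.single v d) = (c * d) • shuffleWord u v := by
  have h1 : ((Finsupp.single v d).sum fun v' cv => ((0 : ℝ) * cv) • shuffleWord u v') = 0 := by
    simp
  rw [shuffleMul, Finsupp.sum_single_index h1, Finsupp.sum_single_index (by simp)]

lemma shuffleMul_zero_left {ι : Type*} (b : List ι →₀ ℝ) : shuffleMul 0 b = 0 :=
  Finsupp.sum_zero_index

lemma shuffleMul_zero_right {ι : Type*} (a : List ι →₀ ℝ) : shuffleMul a 0 = 0 := by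
  rw [shuffleMul]
  exact Finset.sum_eq_zero fun u _ => Finsupp.sum_zero_index

lemma shuffleMul_add_left {ι : Type*} (a a' b : List ι →₀ ℝ) :
    shuffleMul (a + a') b = shuffleMul a b + shuffleMul a' b := by
  rw [shuffleMul, shuffleMul, shuffleMul]
  refine Finsupp.sum_add_index' (fun u => ?_) (fun u c c' => ?_)
  · exact Finset.sum_eq_zero fun v _ => by simp
  · rw [← Finsupp.sum_add]
    refine Finsupp.sum_congr fun v _ => ?_
    rw [add_mul, add_smul]

lemma shuffleMul_add_right {ι : Type*} (a b b' : List ι →₀ ℝ) :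
    shuffleMul a (b + b') = shuffleMul a b + shuffleMul a b' := by
  rw [shuffleMul, shuffleMul, shuffleMul, ← Finsupp.sum_add]
  refine Finsupp.sum_congr fun u _ => ?_
  refine Finsupp.sum_add_index' (fun v => by simp) (fun v c c' => ?_)
  rw [mul_add, add_smul]

/-! ### The word case -/

lemma word_case (γ : ℝ → Fin 2 → ℝ) (T : ℝ)
    (hγ : ∀ i, ContDiff ℝ 1 fun r : ℝ => γ r i) (u v : List (Fin 2)) :
    iteratedIntegral γ T u * iteratedIntegral γ T v = phi γ T (shuffleWord u v) := by
  set G : Fin (u.length + v.length) → ℝ → ℝ := fun p =>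
    deriv (fun r : ℝ => γ r ((u ++ v).get (Fin.cast (List.length_append : (u ++ v).length = u.length + v.length).symm p))) with hG
  have hGc : ∀ p, Continuous (G p) := fun p => (hγ _).continuous_deriv le_rfl
  have hu : iteratedIntegral γ T u
      = ∫ x in simplexSet u.length T, ∏ i, G (Fin.castAdd v.length i) (x i) := by
    rw [iteratedIntegral_eq γ T u rfl]
    refine setIntegral_congr_fun (measurableSet_simplexSet T) fun x _ => ?_
    refine Finset.prod_congr rfl fun i _ => ?_
    rw [hG]
    congr 1
    funext r
    congr 1
    simp [List.get_eq_getElem, List.getElem_append_left]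
  have hv : iteratedIntegral γ T v
      = ∫ y in simplexSet v.length T, ∏ i, G (Fin.natAdd u.length i) (y i) := by
    rw [iteratedIntegral_eq γ T v rfl]
    refine setIntegral_congr_fun (measurableSet_simplexSet T) fun y _ => ?_
    refine Finset.prod_congr rfl fun i _ => ?_
    rw [hG]
    congr 1
    funext r
    congr 1
    simp [List.get_eq_getElem, List.getElem_append_right]
  rw [hu, hv, key_identity u.length v.length T G hGc, shuffleWord, phi_finset_sum]
  refine Finset.sum_congr rfl fun σ _ => ?_
  rw [phi_single, one_mul, iteratedIntegral_ofFn]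

/-! ### The main theorem -/

theorem phi_mul_eq_phi_shuffle (γ : ℝ → Fin 2 → ℝ) (T : ℝ) (hT : 0 < T)
    (hγ : ∀ i, ContDiff ℝ 1 fun r : ℝ => γ r i) (a b : List (Fin 2) →₀ ℝ) :
    phi γ T a * phi γ T b = phi γ T (shuffleMul a b) := by
  induction a using Finsupp.induction_linear with
  | zero => simp [phi_zero, shuffleMul_zero_left]
  | add f g hf hg =>
      rw [shuffleMul_add_left, phi_add, phi_add, add_mul, hf, hg]
  | single u c =>
      induction b using Finsupp.induction_linear with
      | zero => simp [phi_zero, shuffleMul_zero_right]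
      | add f g hf hg =>
          rw [shuffleMul_add_right, phi_add, phi_add, mul_add, hf, hg]
      | single v d =>
          rw [shuffleMul_single_single, phi_single, phi_single, phi_smul,
            ← word_case γ T hγ u v]
          ring
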